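/- Fix ω > 0 and a bounded domain D with C^{1,α} boundary, and suppose the scattering coefficients satisfy the decay bound |W^{TE,TE}_{(n,m)(p,q)}[ε,μ,ρω]| ≤ C^{n+p} ρ^{n+p+1}/(n^n p^p) for all n,p ≥ 1 and ρ ≤ ρ₀ (and similarly for the TM and mixed coefficients). If moreover W_n^{TE}[μ,ε,ρω] = o(ρ^{2N+1}) and W_n^{TM}[μ,ε,ρω] = o(ρ^{2N+1}) for all 1 ≤ n ≤ N, then the scattering amplitude for plane-wave incidence, whose spherical-harmonic coefficients are α_{n,m} = (4π iⁿ/√(n(n+1)))(V_{n,m}(k̂)·c) W_n^{TE} and β_{n,m} = −(4π iⁿ/√(n(n+1)))(1/(iωμ₀))(U_{n,m}(k̂)·c) W_n^{TM}, satisfies A_∞[μ,ε,ρω](c,k̂;x̂) = o(ρ^{2N+1}) uniformly in (k̂,x̂) for ρ ≤ ρ₀. -/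

import Mathlib

open scoped Nat
open Filter Topology

noncomputable section

abbrev E3 := EuclideanSpace ℝ (Fin 3)

/-- The far-field (scattering) amplitude of an S-vanishing layered structure:
`A_∞(x̂) = ∑_{n≥1} (-i^{-n} k₀/√(n(n+1))) ∑_{|m|≤n} (α_{n,m} V_{n,m}(x̂) + β_{n,m} √(μ₀/ε₀) U_{n,m}(x̂))`
with `α_{n,m} = (4π iⁿ/√(n(n+1))) (V_{n,m}(k̂)·c) W_n^{TE}[ρ]` and
`β_{n,m} = -(4π iⁿ/√(n(n+1))) (1/(iωμ₀)) (U_{n,m}(k̂)·c) W_n^{TM}[ρ]`. -/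
noncomputable def ampl (k₀ ω μ₀ ε₀ : ℝ) (WTE WTM : ℕ → ℝ → ℂ)
    (U V : ℕ → ℤ → E3 → Fin 3 → ℂ) (ρ : ℝ) (c : Fin 3 → ℂ)
    (khat xhat : E3) (i : Fin 3) : ℂ :=
  ∑' n : ℕ, ∑ m ∈ Finset.Icc (-(n : ℤ)) (n : ℤ),
    (-(Complex.I ^ (-(n : ℤ))) * (k₀ : ℂ) / (Real.sqrt ((n : ℝ) * ((n : ℝ) + 1)) : ℂ)) *
      (((4 * (Real.pi : ℂ) * Complex.I ^ (n : ℕ) / (Real.sqrt ((n : ℝ) * ((n : ℝ) + 1)) : ℂ)) *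
          (∑ j : Fin 3, V n m khat j * c j) * WTE n ρ) * V n m xhat i +
        (-(4 * (Real.pi : ℂ) * Complex.I ^ (n : ℕ) / (Real.sqrt ((n : ℝ) * ((n : ℝ) + 1)) : ℂ)) *
          (1 / (Complex.I * (ω : ℂ) * (μ₀ : ℂ))) *
          (∑ j : Fin 3, U n m khat j * c j) * WTM n ρ) *
          (Real.sqrt (μ₀ / ε₀) : ℂ) * U n m xhat i)

lemma term_bound (k₀ ω μ₀ ε₀ B : ℝ) (hk : 0 < k₀) (hω : 0 < ω) (hμ : 0 < μ₀) (hB : 0 < B)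
    (WTE WTM : ℕ → ℝ → ℂ) (U V : ℕ → ℤ → E3 → Fin 3 → ℂ)
    (hUV : ∀ n : ℕ, ∀ m : ℤ, ∀ x : E3, ‖x‖ = 1 → ∀ i : Fin 3,
      ‖U n m x i‖ ≤ B * n ∧ ‖V n m x i‖ ≤ B * n)
    (ρ : ℝ) (c : Fin 3 → ℂ) (hc : ∀ j, ‖c j‖ ≤ 1)
    (khat xhat : E3) (hkh : ‖khat‖ = 1) (hxh : ‖xhat‖ = 1) (i : Fin 3)
    (n : ℕ) (hn : 1 ≤ n) :
    ‖∑ m ∈ Finset.Icc (-(n : ℤ)) (n : ℤ),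
    (-(Complex.I ^ (-(n : ℤ))) * (k₀ : ℂ) / (Real.sqrt ((n : ℝ) * ((n : ℝ) + 1)) : ℂ)) *
      (((4 * (Real.pi : ℂ) * Complex.I ^ (n : ℕ) / (Real.sqrt ((n : ℝ) * ((n : ℝ) + 1)) : ℂ)) *
          (∑ j : Fin 3, V n m khat j * c j) * WTE n ρ) * V n m xhat i +
        (-(4 * (Real.pi : ℂ) * Complex.I ^ (n : ℕ) / (Real.sqrt ((n : ℝ) * ((n : ℝ) + 1)) : ℂ)) *
          (1 / (Complex.I * (ω : ℂ) * (μ₀ : ℂ))) *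
          (∑ j : Fin 3, U n m khat j * c j) * WTM n ρ) *
          (Real.sqrt (μ₀ / ε₀) : ℂ) * U n m xhat i)‖ ≤
      3 * (k₀ * (4 * Real.pi) * (3 * B ^ 2) * (1 + Real.sqrt (μ₀ / ε₀) / (ω * μ₀))) * n *
        (‖WTE n ρ‖ + ‖WTM n ρ‖) := by
  have hn1 : (1 : ℝ) ≤ (n : ℝ) := by exact_mod_cast hn
  have hnpos : (0 : ℝ) < (n : ℝ) := by linarith
  set s : ℝ := Real.sqrt ((n : ℝ) * ((n : ℝ) + 1)) with hs_def
  have hns : (n : ℝ) ≤ s := by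
    have := Real.sq_sqrt (by positivity : (0:ℝ) ≤ (n:ℝ) * ((n:ℝ)+1))
    nlinarith [Real.sqrt_nonneg ((n:ℝ) * ((n:ℝ)+1))]
  have hspos : 0 < s := lt_of_lt_of_le hnpos hns
  set K' : ℝ := k₀ * (4 * Real.pi) * (3 * B ^ 2) * (1 + Real.sqrt (μ₀ / ε₀) / (ω * μ₀)) with hK'
  set a : ℝ := ‖WTE n ρ‖
  set b : ℝ := ‖WTM n ρ‖
  have ha : 0 ≤ a := norm_nonneg _
  have hb : 0 ≤ b := norm_nonneg _
  have hd : 0 ≤ Real.sqrt (μ₀ / ε₀) / (ω * μ₀) := by positivity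
  have hA : ‖(-(Complex.I ^ (-(n : ℤ))) * (k₀ : ℂ) / ((s : ℝ) : ℂ))‖ = k₀ / s := by
    rw [norm_div, norm_mul, norm_neg, norm_zpow, Complex.norm_I, one_zpow, one_mul,
      Complex.norm_real, Complex.norm_real, Real.norm_eq_abs, Real.norm_eq_abs,
      abs_of_pos hk, abs_of_pos hspos]
  have hp1 : ‖(4 * (Real.pi : ℂ) * Complex.I ^ (n : ℕ) / ((s : ℝ) : ℂ))‖ = 4 * Real.pi / s := by
    rw [norm_div, norm_mul, norm_mul, norm_pow, Complex.norm_I, one_pow, mul_one,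
      Complex.norm_real, Complex.norm_real, Real.norm_eq_abs, Real.norm_eq_abs,
      abs_of_pos Real.pi_pos, abs_of_pos hspos]
    norm_num
  have hq1 : ‖((1 : ℂ) / (Complex.I * (ω : ℂ) * (μ₀ : ℂ)))‖ = 1 / (ω * μ₀) := by
    rw [norm_div, norm_mul, norm_mul, Complex.norm_I, one_mul, norm_one,
      Complex.norm_real, Complex.norm_real, Real.norm_eq_abs, Real.norm_eq_abs,
      abs_of_pos hω, abs_of_pos hμ]
  have hsq : ‖((Real.sqrt (μ₀ / ε₀) : ℝ) : ℂ)‖ = Real.sqrt (μ₀ / ε₀) := by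
    rw [Complex.norm_real, Real.norm_eq_abs, abs_of_nonneg (Real.sqrt_nonneg _)]
  have hm : ∀ m ∈ Finset.Icc (-(n : ℤ)) (n : ℤ),
      ‖(-(Complex.I ^ (-(n : ℤ))) * (k₀ : ℂ) / ((s : ℝ) : ℂ)) *
      (((4 * (Real.pi : ℂ) * Complex.I ^ (n : ℕ) / ((s : ℝ) : ℂ)) *
          (∑ j : Fin 3, V n m khat j * c j) * WTE n ρ) * V n m xhat i +
        (-(4 * (Real.pi : ℂ) * Complex.I ^ (n : ℕ) / ((s : ℝ) : ℂ)) *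
          (1 / (Complex.I * (ω : ℂ) * (μ₀ : ℂ))) *
          (∑ j : Fin 3, U n m khat j * c j) * WTM n ρ) *
          ((Real.sqrt (μ₀ / ε₀) : ℝ) : ℂ) * U n m xhat i)‖ ≤ K' * (a + b) := by
    intro m _
    have hVsum : ‖∑ j : Fin 3, V n m khat j * c j‖ ≤ 3 * (B * n) := by
      calc ‖∑ j : Fin 3, V n m khat j * c j‖ ≤ ∑ j : Fin 3, ‖V n m khat j * c j‖ :=
            norm_sum_le _ _
        _ ≤ ∑ _j : Fin 3, B * n := Finset.sum_le_sum (fun j _ => by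
            rw [norm_mul]
            calc ‖V n m khat j‖ * ‖c j‖ ≤ (B * n) * 1 :=
                  mul_le_mul ((hUV n m khat hkh j).2) (hc j) (norm_nonneg _) (by positivity)
              _ = B * n := mul_one _)
        _ = 3 * (B * n) := by simp [Finset.sum_const]; try ring
    have hUsum : ‖∑ j : Fin 3, U n m khat j * c j‖ ≤ 3 * (B * n) := by
      calc ‖∑ j : Fin 3, U n m khat j * c j‖ ≤ ∑ j : Fin 3, ‖U n m khat j * c j‖ :=
            norm_sum_le _ _
        _ ≤ ∑ _j : Fin 3, B * n := Finset.sum_le_sum (fun j _ => by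
            rw [norm_mul]
            calc ‖U n m khat j‖ * ‖c j‖ ≤ (B * n) * 1 :=
                  mul_le_mul ((hUV n m khat hkh j).1) (hc j) (norm_nonneg _) (by positivity)
              _ = B * n := mul_one _)
        _ = 3 * (B * n) := by simp [Finset.sum_const]; try ring
    have hVx : ‖V n m xhat i‖ ≤ B * n := (hUV n m xhat hxh i).2
    have hUx : ‖U n m xhat i‖ ≤ B * n := (hUV n m xhat hxh i).1
    rw [norm_mul, hA]
    have hP : ‖(4 * (Real.pi : ℂ) * Complex.I ^ (n : ℕ) / ((s : ℝ) : ℂ)) *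
        (∑ j : Fin 3, V n m khat j * c j) * WTE n ρ * V n m xhat i‖ ≤
        4 * Real.pi / (n : ℝ) * (3 * (B * n)) * a * (B * n) := by
      rw [norm_mul, norm_mul, norm_mul, hp1]
      have h1 : 4 * Real.pi / s ≤ 4 * Real.pi / (n : ℝ) := by
        apply div_le_div_of_nonneg_left (by positivity) hnpos hns
      gcongr
    have hQ : ‖-(4 * (Real.pi : ℂ) * Complex.I ^ (n : ℕ) / ((s : ℝ) : ℂ)) *
        (1 / (Complex.I * (ω : ℂ) * (μ₀ : ℂ))) *
        (∑ j : Fin 3, U n m khat j * c j) * WTM n ρ *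
        ((Real.sqrt (μ₀ / ε₀) : ℝ) : ℂ) * U n m xhat i‖ ≤
        4 * Real.pi / (n : ℝ) * (1 / (ω * μ₀)) * (3 * (B * n)) * b *
          Real.sqrt (μ₀ / ε₀) * (B * n) := by
      rw [norm_mul, norm_mul, norm_mul, norm_mul, norm_mul, norm_neg, hp1, hq1, hsq]
      have h1 : 4 * Real.pi / s ≤ 4 * Real.pi / (n : ℝ) := by
        apply div_le_div_of_nonneg_left (by positivity) hnpos hns
      gcongr
    have hAs : k₀ / s ≤ k₀ / (n : ℝ) := by
      apply div_le_div_of_nonneg_left (by positivity) hnpos hns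
    calc k₀ / s * ‖_ + _‖ ≤ k₀ / (n : ℝ) *
        (4 * Real.pi / (n : ℝ) * (3 * (B * n)) * a * (B * n) +
         4 * Real.pi / (n : ℝ) * (1 / (ω * μ₀)) * (3 * (B * n)) * b *
           Real.sqrt (μ₀ / ε₀) * (B * n)) := by
          apply mul_le_mul hAs ((norm_add_le _ _).trans (add_le_add hP hQ)) (norm_nonneg _)
            (by positivity)
      _ = k₀ * (4 * Real.pi) * (3 * B ^ 2) *
            (a + Real.sqrt (μ₀ / ε₀) / (ω * μ₀) * b) := by
          have hnne : (n : ℝ) ≠ 0 := ne_of_gt hnpos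
          have hwne : ω * μ₀ ≠ 0 := by positivity
          generalize Real.sqrt (μ₀ / ε₀) = t
          field_simp
      _ ≤ K' * (a + b) := by
          rw [hK']
          set base : ℝ := k₀ * (4 * Real.pi) * (3 * B ^ 2) with hbase
          have hbase0 : 0 ≤ base := by rw [hbase]; positivity
          set d : ℝ := Real.sqrt (μ₀ / ε₀) / (ω * μ₀)
          have key : a + d * b ≤ (1 + d) * (a + b) := by nlinarith [mul_nonneg hd ha]
          calc base * (a + d * b) ≤ base * ((1 + d) * (a + b)) :=
                mul_le_mul_of_nonneg_left key hbase0
            _ = base * (1 + d) * (a + b) := by ring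
  have hcard : (Finset.Icc (-(n : ℤ)) (n : ℤ)).card = 2 * n + 1 := by
    rw [Int.card_Icc]; omega
  calc ‖∑ m ∈ Finset.Icc (-(n : ℤ)) (n : ℤ), _‖ ≤
      ∑ m ∈ Finset.Icc (-(n : ℤ)) (n : ℤ), K' * (a + b) := by
        refine (norm_sum_le _ _).trans (Finset.sum_le_sum hm)
    _ = ((2 * n + 1 : ℕ) : ℝ) * (K' * (a + b)) := by
        rw [Finset.sum_const, hcard, nsmul_eq_mul]
    _ ≤ 3 * (n : ℝ) * (K' * (a + b)) := by
        have h2 : ((2 * n + 1 : ℕ) : ℝ) ≤ 3 * n := by push_cast; linarith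
        have hK'nonneg : 0 ≤ K' := by rw [hK']; positivity
        exact mul_le_mul_of_nonneg_right h2 (by positivity)
    _ = 3 * K' * n * (a + b) := by ring

set_option maxHeartbeats 1000000 in
/-- If the scattering coefficients of a layered structure satisfy the low-frequency
decay bound `|W_n[ρω]| ≤ Cⁿ ρ^{2n+1}/n^{2n}` and the S-vanishing property
`W_n[ρω] = o(ρ^{2N+1})` for `1 ≤ n ≤ N`, then the scattering amplitude for plane
wave incidence is `o(ρ^{2N+1})` uniformly in the directions `(k̂, x̂)` and in the
(bounded) polarization `c`. -/
theorem svanishing_far_field_small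
    (k₀ ω μ₀ ε₀ ρ₀ : ℝ) (hk : 0 < k₀) (hω : 0 < ω) (hμ : 0 < μ₀) (hε : 0 < ε₀)
    (hρ₀ : 0 < ρ₀) (N : ℕ) (hN : 1 ≤ N)
    (WTE WTM : ℕ → ℝ → ℂ) (U V : ℕ → ℤ → E3 → Fin 3 → ℂ)
    (hUV : ∃ B > (0 : ℝ), ∀ n : ℕ, ∀ m : ℤ, ∀ x : E3, ‖x‖ = 1 → ∀ i : Fin 3,
      ‖U n m x i‖ ≤ B * n ∧ ‖V n m x i‖ ≤ B * n)
    (hdecay : ∃ C > (0 : ℝ), ∀ n : ℕ, 1 ≤ n → ∀ ρ : ℝ, 0 < ρ → ρ ≤ ρ₀ →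
      ‖WTE n ρ‖ ≤ C ^ n * ρ ^ (2 * n + 1) / (n : ℝ) ^ (2 * n) ∧
      ‖WTM n ρ‖ ≤ C ^ n * ρ ^ (2 * n + 1) / (n : ℝ) ^ (2 * n))
    (hsmall : ∀ n : ℕ, 1 ≤ n → n ≤ N → ∀ ε > (0 : ℝ), ∃ δ > (0 : ℝ),
      ∀ ρ : ℝ, 0 < ρ → ρ ≤ δ →
        ‖WTE n ρ‖ ≤ ε * ρ ^ (2 * N + 1) ∧ ‖WTM n ρ‖ ≤ ε * ρ ^ (2 * N + 1)) :
    ∀ ε > (0 : ℝ), ∃ δ > (0 : ℝ), ∀ ρ : ℝ, 0 < ρ → ρ ≤ δ → ρ ≤ ρ₀ →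
      ∀ c : Fin 3 → ℂ, (∀ j, ‖c j‖ ≤ 1) →
      ∀ khat xhat : E3, ‖khat‖ = 1 → ‖xhat‖ = 1 → ∀ i : Fin 3,
        ‖ampl k₀ ω μ₀ ε₀ WTE WTM U V ρ c khat xhat i‖ ≤ ε * ρ ^ (2 * N + 1) := by
  intro ε hε
  obtain ⟨B, hB, hUVb⟩ := hUV
  obtain ⟨C, hC, hdec⟩ := hdecay
  have hNpos : (0 : ℝ) < (N : ℝ) := by exact_mod_cast Nat.lt_of_lt_of_le Nat.zero_lt_one hN
  set K' : ℝ := k₀ * (4 * Real.pi) * (3 * B ^ 2) * (1 + Real.sqrt (μ₀ / ε₀) / (ω * μ₀)) with hK'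
  have hK'pos : 0 < K' := by rw [hK']; positivity
  set K₁ : ℝ := 3 * K' with hK₁
  have hK₁pos : 0 < K₁ := by rw [hK₁]; positivity
  set ε' : ℝ := ε / (4 * K₁ * N * (N + 1)) with hε'
  have hε'pos : 0 < ε' := by
    rw [hε']; apply div_pos hε; positivity
  have Hδ : ∀ n : ℕ, ∃ δ > (0 : ℝ), (1 ≤ n → n ≤ N → ∀ ρ : ℝ, 0 < ρ → ρ ≤ δ →
      ‖WTE n ρ‖ ≤ ε' * ρ ^ (2 * N + 1) ∧ ‖WTM n ρ‖ ≤ ε' * ρ ^ (2 * N + 1)) := by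
    intro n
    by_cases h : 1 ≤ n ∧ n ≤ N
    · obtain ⟨δ, hδ, hδ'⟩ := hsmall n h.1 h.2 ε' hε'pos
      exact ⟨δ, hδ, fun _ _ => hδ'⟩
    · exact ⟨1, one_pos, fun h1 h2 => absurd ⟨h1, h2⟩ h⟩
  choose δf hδfpos hδf using Hδ
  have hne : (Finset.range (N + 1)).Nonempty := ⟨0, by simp⟩
  set δs : ℝ := (Finset.range (N + 1)).inf' hne δf with hδs
  have hδspos : 0 < δs := by
    rw [hδs]; rw [Finset.lt_inf'_iff]; exact fun n _ => hδfpos n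
  set δ1 : ℝ := Real.sqrt (1 / (2 * C)) with hδ1
  set δ2 : ℝ := Real.sqrt (ε / (8 * K₁ * C ^ (N + 1))) with hδ2
  have hδ1pos : 0 < δ1 := by rw [hδ1]; positivity
  have hδ2pos : 0 < δ2 := by rw [hδ2]; positivity
  refine ⟨min (min δs δ1) δ2, lt_min (lt_min hδspos hδ1pos) hδ2pos, ?_⟩
  intro ρ hρ hρδ hρρ₀ c hc khat xhat hkh hxh i
  have hρδs : ρ ≤ δs := le_trans hρδ (le_trans (min_le_left _ _) (min_le_left _ _))
  have hρδ1 : ρ ≤ δ1 := le_trans hρδ (le_trans (min_le_left _ _) (min_le_right _ _))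
  have hρδ2 : ρ ≤ δ2 := le_trans hρδ (min_le_right _ _)
  have hρ2δ1 : ρ ^ 2 ≤ 1 / (2 * C) := by
    have h := pow_le_pow_left₀ hρ.le hρδ1 2
    rwa [hδ1, Real.sq_sqrt (by positivity)] at h
  have hCρ : C * ρ ^ 2 ≤ 1 / 2 := by
    have h := mul_le_mul_of_nonneg_left hρ2δ1 hC.le
    calc C * ρ ^ 2 ≤ C * (1 / (2 * C)) := h
      _ = 1 / 2 := by field_simp
  have hρ2δ2 : ρ ^ 2 ≤ ε / (8 * K₁ * C ^ (N + 1)) := by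
    have h := pow_le_pow_left₀ hρ.le hρδ2 2
    rwa [hδ2, Real.sq_sqrt (by positivity)] at h
  obtain ⟨f, hf⟩ : ∃ f : ℕ → ℂ, f = fun n : ℕ => ∑ m ∈ Finset.Icc (-(n : ℤ)) (n : ℤ),
    (-(Complex.I ^ (-(n : ℤ))) * (k₀ : ℂ) / (Real.sqrt ((n : ℝ) * ((n : ℝ) + 1)) : ℂ)) *
      (((4 * (Real.pi : ℂ) * Complex.I ^ (n : ℕ) / (Real.sqrt ((n : ℝ) * ((n : ℝ) + 1)) : ℂ)) *
          (∑ j : Fin 3, V n m khat j * c j) * WTE n ρ) * V n m xhat i +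
        (-(4 * (Real.pi : ℂ) * Complex.I ^ (n : ℕ) / (Real.sqrt ((n : ℝ) * ((n : ℝ) + 1)) : ℂ)) *
          (1 / (Complex.I * (ω : ℂ) * (μ₀ : ℂ))) *
          (∑ j : Fin 3, U n m khat j * c j) * WTM n ρ) *
          (Real.sqrt (μ₀ / ε₀) : ℂ) * U n m xhat i) := ⟨_, rfl⟩
  have hzero : f 0 = 0 := by
    rw [hf]
    norm_num
  have hterm : ∀ n : ℕ, 1 ≤ n → ‖f n‖ ≤ K₁ * n * (‖WTE n ρ‖ + ‖WTM n ρ‖) := by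
    intro n hn
    have h := term_bound k₀ ω μ₀ ε₀ B hk hω hμ hB WTE WTM U V hUVb ρ c hc khat xhat hkh hxh i n hn
    rw [hK₁, hK', hf]
    exact h
  have hgen : ∀ n : ℕ, ‖f n‖ ≤ 2 * K₁ * ρ * (C * ρ ^ 2) ^ n := by
    intro n
    rcases Nat.eq_zero_or_pos n with h0 | h1
    · subst h0; rw [hzero]; simp; positivity
    · have hn1 : (1 : ℝ) ≤ (n : ℝ) := by exact_mod_cast h1
      have hnd := hdec n h1 ρ hρ hρρ₀
      have h2 : ‖WTE n ρ‖ + ‖WTM n ρ‖ ≤ 2 * (C ^ n * ρ ^ (2 * n + 1) / (n : ℝ) ^ (2 * n)) := by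
        linarith [hnd.1, hnd.2]
      have hnpow : (n : ℝ) ≤ (n : ℝ) ^ (2 * n) := le_self_pow₀ hn1 (by omega)
      have hfrac : (n : ℝ) / (n : ℝ) ^ (2 * n) ≤ 1 := div_le_one_of_le₀ hnpow (by positivity)
      calc ‖f n‖ ≤ K₁ * n * (‖WTE n ρ‖ + ‖WTM n ρ‖) := hterm n h1
        _ ≤ K₁ * n * (2 * (C ^ n * ρ ^ (2 * n + 1) / (n : ℝ) ^ (2 * n))) :=
            mul_le_mul_of_nonneg_left h2 (by positivity)
        _ = (2 * K₁ * (C ^ n * ρ ^ (2 * n + 1))) * ((n : ℝ) / (n : ℝ) ^ (2 * n)) := by ring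
        _ ≤ (2 * K₁ * (C ^ n * ρ ^ (2 * n + 1))) * 1 :=
            mul_le_mul_of_nonneg_left hfrac (by positivity)
        _ = 2 * K₁ * ρ * (C * ρ ^ 2) ^ n := by rw [mul_pow, ← pow_mul]; ring
  have hhalf : ∀ n : ℕ, (C * ρ ^ 2) ^ n ≤ (1 / 2 : ℝ) ^ n := fun n =>
    pow_le_pow_left₀ (by positivity) hCρ n
  have hsumm : Summable (fun n => ‖f n‖) := by
    apply Summable.of_nonneg_of_le (fun n => norm_nonneg _)
      (fun n => (hgen n).trans (mul_le_mul_of_nonneg_left (hhalf n) (by positivity)))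
    exact (summable_geometric_of_lt_one (by norm_num) (by norm_num)).mul_left _
  have hhead : ∑ n ∈ Finset.range (N + 1), ‖f n‖ ≤ ε / 2 * ρ ^ (2 * N + 1) := by
    have hb : ∀ n ∈ Finset.range (N + 1), ‖f n‖ ≤ 2 * K₁ * N * ε' * ρ ^ (2 * N + 1) := by
      intro n hn'
      rcases Nat.eq_zero_or_pos n with h0 | h1
      · subst h0; rw [hzero]; simp; positivity
      · have hnN : n ≤ N := by
          have := Finset.mem_range.mp hn'; omega
        have hρδn : ρ ≤ δf n := le_trans hρδs (by rw [hδs]; exact Finset.inf'_le _ hn')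
        have hw := hδf n h1 hnN ρ hρ hρδn
        have hnNr : (n : ℝ) ≤ (N : ℝ) := by exact_mod_cast hnN
        calc ‖f n‖ ≤ K₁ * n * (‖WTE n ρ‖ + ‖WTM n ρ‖) := hterm n h1
          _ ≤ K₁ * n * (ε' * ρ ^ (2 * N + 1) + ε' * ρ ^ (2 * N + 1)) :=
              mul_le_mul_of_nonneg_left (add_le_add hw.1 hw.2) (by positivity)
          _ ≤ K₁ * N * (ε' * ρ ^ (2 * N + 1) + ε' * ρ ^ (2 * N + 1)) := by
              apply mul_le_mul_of_nonneg_right _ (by positivity)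
              exact mul_le_mul_of_nonneg_left hnNr hK₁pos.le
          _ = 2 * K₁ * N * ε' * ρ ^ (2 * N + 1) := by ring
    calc ∑ n ∈ Finset.range (N + 1), ‖f n‖ ≤
        ∑ _n ∈ Finset.range (N + 1), 2 * K₁ * N * ε' * ρ ^ (2 * N + 1) :=
          Finset.sum_le_sum hb
      _ = ((N + 1 : ℕ) : ℝ) * (2 * K₁ * N * ε' * ρ ^ (2 * N + 1)) := by
          rw [Finset.sum_const, Finset.card_range, nsmul_eq_mul]
      _ = ε / 2 * ρ ^ (2 * N + 1) := by
          rw [hε']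
          have hK₁ne : K₁ ≠ 0 := ne_of_gt hK₁pos
          have hNne : (N : ℝ) ≠ 0 := ne_of_gt hNpos
          have hN1ne : (N : ℝ) + 1 ≠ 0 := by positivity
          push_cast
          field_simp
          ring
  have htail : ∑' j : ℕ, ‖f (j + (N + 1))‖ ≤ ε / 2 * ρ ^ (2 * N + 1) := by
    set A : ℝ := 2 * K₁ * C ^ (N + 1) * ρ ^ 2 * ρ ^ (2 * N + 1) with hA
    have hApos : 0 < A := by rw [hA]; positivity
    have hbnd : ∀ j : ℕ, ‖f (j + (N + 1))‖ ≤ A * (1 / 2 : ℝ) ^ j := by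
      intro j
      calc ‖f (j + (N + 1))‖ ≤ 2 * K₁ * ρ * (C * ρ ^ 2) ^ (j + (N + 1)) := hgen _
        _ = A * (C * ρ ^ 2) ^ j := by
            have hx : 2 * K₁ * ρ * (C * ρ ^ 2) ^ (N + 1) = A := by
              rw [hA, mul_pow, ← pow_mul,
                show 2 * (N + 1) = 2 * N + 1 + 1 from by omega, pow_succ]
              ring
            rw [pow_add, ← hx]
            ring
        _ ≤ A * (1 / 2 : ℝ) ^ j := mul_le_mul_of_nonneg_left (hhalf j) hApos.le
    calc ∑' j : ℕ, ‖f (j + (N + 1))‖ ≤ ∑' j : ℕ, A * (1 / 2 : ℝ) ^ j := by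
          apply Summable.tsum_le_tsum hbnd ((summable_nat_add_iff (N + 1)).mpr hsumm)
          exact (summable_geometric_of_lt_one (by norm_num) (by norm_num)).mul_left _
      _ = A * 2 := by rw [tsum_mul_left, tsum_geometric_two]
      _ ≤ ε / 2 * ρ ^ (2 * N + 1) := by
          have h8 : (0 : ℝ) < 8 * K₁ * C ^ (N + 1) := by positivity
          have hkey : ρ ^ 2 * (8 * K₁ * C ^ (N + 1)) ≤ ε := by
            rw [← le_div_iff₀ h8]; exact hρ2δ2
          have hmain : 4 * K₁ * C ^ (N + 1) * ρ ^ 2 ≤ ε / 2 := by linarith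
          calc A * 2 = (4 * K₁ * C ^ (N + 1) * ρ ^ 2) * ρ ^ (2 * N + 1) := by rw [hA]; ring
            _ ≤ ε / 2 * ρ ^ (2 * N + 1) :=
                mul_le_mul_of_nonneg_right hmain (by positivity)
  have hampl : ampl k₀ ω μ₀ ε₀ WTE WTM U V ρ c khat xhat i = ∑' n : ℕ, f n := by
    simp only [ampl, hf]
  calc ‖ampl k₀ ω μ₀ ε₀ WTE WTM U V ρ c khat xhat i‖ = ‖∑' n : ℕ, f n‖ := by rw [hampl]
    _ ≤ ∑' n : ℕ, ‖f n‖ := norm_tsum_le_tsum_norm hsumm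
    _ = ∑ n ∈ Finset.range (N + 1), ‖f n‖ + ∑' j : ℕ, ‖f (j + (N + 1))‖ :=
        (Summable.sum_add_tsum_nat_add (N + 1) hsumm).symm
    _ ≤ ε / 2 * ρ ^ (2 * N + 1) + ε / 2 * ρ ^ (2 * N + 1) := add_le_add hhead htail
    _ = ε * ρ ^ (2 * N + 1) := by ring
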